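/- Let K be a field of characteristic 0 and let L be a nonzero finite-dimensional Lie algebra over K with universal enveloping algebra U = U(L). Regard U as an abelian Lie algebra on which L acts by left multiplication. Then the semidirect product Lie algebra U ⋊ L is finitely generated but not finitely presented. -/

import Mathlib

open UniversalEnvelopingAlgebra

/-- A Lie algebra is finitely generated if it is generated, as a Lie algebra,
by a finite set. -/
def LieAlgebra.IsFinitelyGenerated (K L : Type*) [CommRing K] [LieRing L]
    [LieAlgebra K L] : Prop :=
  ∃ s : Finset L, LieSubalgebra.lieSpan K L ↑s = ⊤

/-- A Lie algebra is finitely presented if it is the quotient of a free Lie algebra on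
finitely many generators by a finitely generated Lie ideal. -/
def LieAlgebra.IsFinitelyPresented (K L : Type*) [CommRing K] [LieRing L]
    [LieAlgebra K L] : Prop :=
  ∃ (n : ℕ) (π : FreeLieAlgebra K (Fin n) →ₗ⁅K⁆ L), Function.Surjective π ∧
    ∃ s : Finset (FreeLieAlgebra K (Fin n)),
      LieSubmodule.lieSpan K (FreeLieAlgebra K (Fin n)) ↑s = π.ker

section SemidirectConstruction

variable (K : Type*) [CommRing K] (L : Type*) [LieRing L] [LieAlgebra K L]

/-- The underlying type of the semidirect product Lie algebra `U(L) ⋊ L`, where the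
enveloping algebra `U(L)` is viewed as an abelian Lie algebra on which `L` acts by
left multiplication. -/
def LieSemidirect := UniversalEnvelopingAlgebra K L × L

namespace LieSemidirect

variable {K L}

instance : AddCommGroup (LieSemidirect K L) :=
  inferInstanceAs (AddCommGroup (UniversalEnvelopingAlgebra K L × L))

instance : Module K (LieSemidirect K L) :=
  inferInstanceAs (Module K (UniversalEnvelopingAlgebra K L × L))

/-- The semidirect product bracket: `U(L)` is an abelian Lie algebra, `L` has its own
bracket, and `L` acts on `U(L)` by left multiplication:
`⁅(u, x), (v, y)⁆ = (x·v - y·u, ⁅x, y⁆)`. -/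
noncomputable instance : LieRing (LieSemidirect K L) where
  bracket p q := (ι K p.2 * q.1 - ι K q.2 * p.1, ⁅p.2, q.2⁆)
  add_lie p q r := by
    refine Prod.ext ?_ ?_
    · show ι K (p.2 + q.2) * r.1 - ι K r.2 * (p.1 + q.1)
        = (ι K p.2 * r.1 - ι K r.2 * p.1) + (ι K q.2 * r.1 - ι K r.2 * q.1)
      simp only [map_add, add_mul, mul_add]
      abel
    · exact add_lie p.2 q.2 r.2
  lie_add p q r := by
    refine Prod.ext ?_ ?_
    · show ι K p.2 * (q.1 + r.1) - ι K (q.2 + r.2) * p.1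
        = (ι K p.2 * q.1 - ι K q.2 * p.1) + (ι K p.2 * r.1 - ι K r.2 * p.1)
      simp only [map_add, add_mul, mul_add]
      abel
    · exact lie_add p.2 q.2 r.2
  lie_self p := by
    refine Prod.ext ?_ ?_
    · exact sub_self _
    · exact lie_self p.2
  leibniz_lie p q r := by
    refine Prod.ext ?_ ?_
    · show ι K p.2 * (ι K q.2 * r.1 - ι K r.2 * q.1) - ι K ⁅q.2, r.2⁆ * p.1
        = (ι K ⁅p.2, q.2⁆ * r.1 - ι K r.2 * (ι K p.2 * q.1 - ι K q.2 * p.1))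
          + (ι K q.2 * (ι K p.2 * r.1 - ι K r.2 * p.1) - ι K ⁅p.2, r.2⁆ * q.1)
      simp only [LieHom.map_lie, Ring.lie_def]
      noncomm_ring
    · exact leibniz_lie p.2 q.2 r.2

noncomputable instance : LieAlgebra K (LieSemidirect K L) where
  lie_smul t p q := by
    refine Prod.ext ?_ ?_
    · show ι K p.2 * (t • q.1) - ι K (t • q.2) * p.1 = t • (ι K p.2 * q.1 - ι K q.2 * p.1)
      simp [mul_smul_comm, smul_mul_assoc, smul_sub]
    · exact lie_smul t p.2 q.2

end LieSemidirect

end SemidirectConstruction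

attribute [local instance] LieRing.ofAssociativeRing

section AuxDual

/-- Any linearly independent family in a vector space admits a dual family of functionals. -/
theorem exists_dual_family {K V ι : Type*} [Field K] [AddCommGroup V] [Module K V]
    [DecidableEq ι] {v : ι → V} (hv : LinearIndependent K v) :
    ∃ g : ι → (V →ₗ[K] K), ∀ i j, g i (v j) = if i = j then 1 else 0 := by
  obtain ⟨q, hq⟩ := Submodule.exists_isCompl (Submodule.span K (Set.range v))
  let b : Module.Basis ι K (Submodule.span K (Set.range v)) := Module.Basis.span hv
  refine ⟨fun i => (b.coord i).comp (Submodule.projectionOnto _ q hq), fun i j => ?_⟩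
  have hmem : v j ∈ Submodule.span K (Set.range v) :=
    Submodule.subset_span (Set.mem_range_self j)
  have h1 : Submodule.projectionOnto _ q hq (v j) = ⟨v j, hmem⟩ :=
    Submodule.projectionOnto_apply_left hq ⟨v j, hmem⟩
  have h2 : (⟨v j, hmem⟩ : Submodule.span K (Set.range v)) = b j :=
    (Module.Basis.span_apply hv j).symm
  rw [LinearMap.comp_apply, h1, h2, Module.Basis.coord_apply, Module.Basis.repr_self]
  simp [Finsupp.single_apply, eq_comm]

end AuxDual

section Hopf

open scoped TensorProduct

variable (K : Type*) [Field K] (L : Type*) [LieRing L] [LieAlgebra K L]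

/-- The antipode-like anti-homomorphism of the universal enveloping algebra. -/
noncomputable def uAnti : UniversalEnvelopingAlgebra K L →ₐ[K] (UniversalEnvelopingAlgebra K L)ᵐᵒᵖ :=
  UniversalEnvelopingAlgebra.lift K
    { toFun := fun x => MulOpposite.op (-(ι K x))
      map_add' := fun x y => by
        simp only [map_add, neg_add, MulOpposite.op_add]
      map_smul' := fun c x => by
        simp only [map_smul, RingHom.id_apply, ← smul_neg, MulOpposite.op_smul]
      map_lie' := fun {x y} => by
        simp only [LieHom.map_lie, Ring.lie_def, ← MulOpposite.op_mul, neg_mul, mul_neg,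
          neg_neg, ← MulOpposite.op_sub]
        rw [neg_sub] }

/-- The antipode as a linear endomorphism of `U(L)`. -/
noncomputable def uS : UniversalEnvelopingAlgebra K L →ₗ[K] UniversalEnvelopingAlgebra K L :=
  (MulOpposite.opLinearEquiv K).symm.toLinearMap.comp (uAnti K L).toLinearMap

theorem uS_apply (u : UniversalEnvelopingAlgebra K L) :
    uS K L u = MulOpposite.unop (uAnti K L u) := rfl

theorem uS_one : uS K L 1 = 1 := by simp [uS_apply]

theorem uS_mul (a b : UniversalEnvelopingAlgebra K L) :
    uS K L (a * b) = uS K L b * uS K L a := by simp [uS_apply]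

theorem uS_iota (x : L) : uS K L (ι K x) = -(ι K x) := by
  rw [uS_apply, uAnti, UniversalEnvelopingAlgebra.lift_ι_apply]
  rfl

theorem uS_pow (x : L) (m : ℕ) : uS K L ((ι K x) ^ m) = (-(ι K x)) ^ m := by
  induction m with
  | zero => simpa using uS_one K L
  | succ m ih => rw [pow_succ, uS_mul, ih, uS_iota, pow_succ']

/-- The counit of `U(L)`. -/
noncomputable def uEps : UniversalEnvelopingAlgebra K L →ₐ[K] K :=
  UniversalEnvelopingAlgebra.lift K (0 : L →ₗ⁅K⁆ K)

theorem uEps_iota (x : L) : uEps K L (ι K x) = 0 := by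
  rw [uEps, UniversalEnvelopingAlgebra.lift_ι_apply]
  rfl

/-- The comultiplication of `U(L)`. -/
noncomputable def uComul : UniversalEnvelopingAlgebra K L →ₐ[K]
    (UniversalEnvelopingAlgebra K L ⊗[K] UniversalEnvelopingAlgebra K L) :=
  UniversalEnvelopingAlgebra.lift K
    { toFun := fun x => ι K x ⊗ₜ[K] (1 : UniversalEnvelopingAlgebra K L)
        + (1 : UniversalEnvelopingAlgebra K L) ⊗ₜ[K] ι K x
      map_add' := fun x y => by
        simp [TensorProduct.add_tmul, TensorProduct.tmul_add]
        abel
      map_smul' := fun c x => by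
        simp [TensorProduct.smul_tmul', TensorProduct.tmul_smul, smul_add]
      map_lie' := fun {x y} => by
        simp only [LieHom.map_lie, Ring.lie_def, mul_add, add_mul,
          Algebra.TensorProduct.tmul_mul_tmul, one_mul, mul_one,
          TensorProduct.sub_tmul, TensorProduct.tmul_sub]
        abel }

theorem uComul_iota (x : L) :
    uComul K L (ι K x) = ι K x ⊗ₜ[K] (1 : UniversalEnvelopingAlgebra K L)
      + (1 : UniversalEnvelopingAlgebra K L) ⊗ₜ[K] ι K x := by
  rw [uComul, UniversalEnvelopingAlgebra.lift_ι_apply]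
  rfl

end Hopf
section PowIndep

open scoped TensorProduct
open UniversalEnvelopingAlgebra

variable {K : Type*} [Field K] {L : Type*} [LieRing L] [LieAlgebra K L]

theorem exists_iota_ne_zero (K : Type*) [Field K] (L : Type*) [LieRing L] [LieAlgebra K L]
    [Nontrivial L] : ∃ x : L, ι K x ≠ 0 := by
  classical
  by_cases habel : ∀ a b : L, ⁅a, b⁆ = (0 : L)
  · obtain ⟨x, hx⟩ := exists_ne (0 : L)
    have hli : LinearIndependent K fun _ : Fin 1 => x := linearIndependent_unique_iff.mpr hx
    obtain ⟨g, hg⟩ := exists_dual_family hli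
    have hξ : g 0 x = 1 := by simpa using hg 0 0
    let φ : L →ₗ⁅K⁆ DualNumber K :=
      { toFun := fun y => g 0 y • (DualNumber.eps : DualNumber K)
        map_add' := fun a b => by simp [add_smul]
        map_smul' := fun c a => by simp [smul_smul]
        map_lie' := fun {a b} => by
          simp [habel a b, Ring.lie_def, smul_mul_assoc, mul_smul_comm,
            DualNumber.eps_mul_eps, smul_smul] }
    refine ⟨x, fun h0 => ?_⟩
    have h1 : UniversalEnvelopingAlgebra.lift K φ (ι K x) = g 0 x • DualNumber.eps :=
      UniversalEnvelopingAlgebra.lift_ι_apply K φ x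
    rw [h0, map_zero, hξ, one_smul] at h1
    have h2 : (DualNumber.eps : DualNumber K) ≠ 0 := by
      intro h
      have := congrArg TrivSqZeroExt.snd h
      simp at this
    exact h2 h1.symm
  · push_neg at habel
    obtain ⟨a, b, hab⟩ := habel
    refine ⟨a, fun h0 => ?_⟩
    have h1 : UniversalEnvelopingAlgebra.lift K (LieAlgebra.ad K L) (ι K a) =
        LieAlgebra.ad K L a := UniversalEnvelopingAlgebra.lift_ι_apply K _ a
    rw [h0, map_zero] at h1
    apply hab
    rw [← LieAlgebra.ad_apply (R := K), ← h1]
    simp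

theorem iota_pow_linearIndependent [CharZero K] {x : L} (hx : ι K x ≠ 0) (N : ℕ) :
    LinearIndependent K fun i : Fin N => (ι K x) ^ (i : ℕ) := by
  classical
  have hnt : Nontrivial (UniversalEnvelopingAlgebra K L) := nontrivial_of_ne _ _ hx
  induction N with
  | zero => exact linearIndependent_empty_type
  | succ n ih =>
    have hsnoc : (fun i : Fin (n + 1) => (ι K x) ^ (i : ℕ))
        = Fin.snoc (fun i : Fin n => (ι K x) ^ (i : ℕ)) ((ι K x) ^ n) := by
      funext i
      induction i using Fin.lastCases with
      | last => simp
      | cast j => simp [Fin.snoc_castSucc]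
    rw [hsnoc, linearIndependent_fin_snoc]
    refine ⟨ih, fun hmem => ?_⟩
    set t := ι K x with ht
    obtain ⟨c, hc⟩ := (Submodule.mem_span_range_iff_exists_fun K).mp hmem
    by_cases h0 : n = 0
    · subst h0
      simp at hc
    by_cases h1 : n = 1
    · subst h1
      rw [Fin.sum_univ_one] at hc
      have h := congrArg (uEps K L) hc
      simp [ht, uEps] at h
      rw [h] at hc
      simp at hc
      exact hx hc.symm
    have h2n : 2 ≤ n := by omega
    obtain ⟨g, hg⟩ := exists_dual_family ih
    have ha1 : 1 < n := by omega
    have hb1 : n - 1 < n := by omega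
    set a1 : Fin n := ⟨1, ha1⟩ with ha1d
    set b1 : Fin n := ⟨n - 1, hb1⟩ with hb1d
    set G : (UniversalEnvelopingAlgebra K L ⊗[K] UniversalEnvelopingAlgebra K L) →ₗ[K] K :=
      (LinearMap.mul' K K).comp (TensorProduct.map (g a1) (g b1)) with hGdef
    have hG : ∀ p q : UniversalEnvelopingAlgebra K L,
        G (p ⊗ₜ[K] q) = g a1 p * g b1 q := fun p q => by
      simp [hGdef]
    have hgpow : ∀ (i : Fin n) (p : ℕ), p < n → g i (t ^ p) = if (i : ℕ) = p then 1 else 0 := by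
      intro i p hp
      have := hg i ⟨p, hp⟩
      simpa [Fin.ext_iff] using this
    have hD : ∀ m : ℕ, G (uComul K L (t ^ m))
        = ∑ i ∈ Finset.range (m + 1), (m.choose i : K) * (g a1 (t ^ i) * g b1 (t ^ (m - i))) := by
      intro m
      have hcomm : Commute (t ⊗ₜ[K] (1 : UniversalEnvelopingAlgebra K L))
          ((1 : UniversalEnvelopingAlgebra K L) ⊗ₜ[K] t) := by
        simp [Commute, SemiconjBy, Algebra.TensorProduct.tmul_mul_tmul]
      rw [map_pow, uComul_iota, Commute.add_pow hcomm, map_sum]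
      refine Finset.sum_congr rfl fun i hi => ?_
      have hterm : (t ⊗ₜ[K] (1 : UniversalEnvelopingAlgebra K L)) ^ i
            * ((1 : UniversalEnvelopingAlgebra K L) ⊗ₜ[K] t) ^ (m - i)
            * ((m.choose i : ℕ) : UniversalEnvelopingAlgebra K L ⊗[K] UniversalEnvelopingAlgebra K L)
          = (m.choose i : ℕ) • ((t ^ i) ⊗ₜ[K] (t ^ (m - i))) := by
        rw [Algebra.TensorProduct.tmul_pow, Algebra.TensorProduct.tmul_pow, one_pow, one_pow,
          Algebra.TensorProduct.tmul_mul_tmul, mul_one, one_mul,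
          ← (Nat.cast_commute (m.choose i) _).eq, ← nsmul_eq_mul]
      rw [hterm, map_nsmul, hG]
      simp [nsmul_eq_mul]
    have hLHS : G (uComul K L (t ^ n)) = (n : K) := by
      rw [hD]
      rw [Finset.sum_eq_single 1]
      · rw [hgpow a1 1 ha1, hgpow b1 (n - 1) hb1]
        simp [ha1d, hb1d, Nat.choose_one_right]
      · intro i hi hne
        rcases lt_or_ge i n with h | h
        · rw [hgpow a1 i h]
          have : ¬((a1 : ℕ) = i) := by simp [ha1d]; omega
          simp [this]
        · have hin : i = n := by
            simp only [Finset.mem_range] at hi; omega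
          rw [show n - i = 0 from by omega, hgpow b1 0 (by omega)]
          have : ¬((b1 : ℕ) = 0) := by simp [hb1d]; omega
          simp [this]
      · intro h
        exact absurd (Finset.mem_range.mpr (by omega)) h
    have hRHS : ∀ j : Fin n, G (uComul K L (t ^ (j : ℕ))) = 0 := by
      intro j
      rw [hD]
      refine Finset.sum_eq_zero fun i hi => ?_
      have hij : i ≤ (j : ℕ) := by
        simp only [Finset.mem_range, Nat.lt_succ_iff] at hi; exact hi
      have hjn : (j : ℕ) < n := j.isLt
      rcases eq_or_ne i 1 with rfl | hne
      · rw [hgpow b1 ((j : ℕ) - 1) (by omega)]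
        have : ¬((b1 : ℕ) = (j : ℕ) - 1) := by simp [hb1d]; omega
        simp [this]
      · rw [hgpow a1 i (by omega)]
        have : ¬((a1 : ℕ) = i) := by simp [ha1d]; omega
        simp [this]
    have hfin := congrArg (fun z => G (uComul K L z)) hc
    simp only [map_sum, map_smul] at hfin
    have hzero : (n : K) = 0 := by
      rw [← hLHS, ← hfin]
      refine Finset.sum_eq_zero fun j _ => ?_
      rw [hRHS j]
      simp
    have : n = 0 := Nat.cast_eq_zero.mp hzero
    omega

end PowIndep
section CocycleLayer

open UniversalEnvelopingAlgebra

variable {K : Type*} [Field K] {L : Type*} [LieRing L] [LieAlgebra K L]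

theorem LieSemidirect.bracket_def' (p q : LieSemidirect K L) :
    ⁅p, q⁆ = (ι K p.2 * q.1 - ι K q.2 * p.1, ⁅p.2, q.2⁆) := rfl

/-- The invariant alternating form attached to a functional `f` on `U(L)`. -/
noncomputable def Bf (f : UniversalEnvelopingAlgebra K L →ₗ[K] K)
    (u v : UniversalEnvelopingAlgebra K L) : K :=
  f (uS K L u * v - uS K L v * u)

theorem Bf_add_left (f : UniversalEnvelopingAlgebra K L →ₗ[K] K)
    (u u' v : UniversalEnvelopingAlgebra K L) :
    Bf f (u + u') v = Bf f u v + Bf f u' v := by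
  unfold Bf
  rw [← map_add]
  congr 1
  rw [map_add]
  noncomm_ring

theorem Bf_add_right (f : UniversalEnvelopingAlgebra K L →ₗ[K] K)
    (u v v' : UniversalEnvelopingAlgebra K L) :
    Bf f u (v + v') = Bf f u v + Bf f u v' := by
  unfold Bf
  rw [← map_add]
  congr 1
  rw [map_add]
  noncomm_ring

theorem Bf_sub_left (f : UniversalEnvelopingAlgebra K L →ₗ[K] K)
    (u u' v : UniversalEnvelopingAlgebra K L) :
    Bf f (u - u') v = Bf f u v - Bf f u' v := by
  unfold Bf
  rw [← map_sub]
  congr 1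
  rw [map_sub]
  noncomm_ring

theorem Bf_sub_right (f : UniversalEnvelopingAlgebra K L →ₗ[K] K)
    (u v v' : UniversalEnvelopingAlgebra K L) :
    Bf f u (v - v') = Bf f u v - Bf f u v' := by
  unfold Bf
  rw [← map_sub]
  congr 1
  rw [map_sub]
  noncomm_ring

theorem Bf_smul_right (f : UniversalEnvelopingAlgebra K L →ₗ[K] K)
    (c : K) (u v : UniversalEnvelopingAlgebra K L) :
    Bf f u (c • v) = c • Bf f u v := by
  unfold Bf
  rw [← map_smul]
  congr 1
  rw [map_smul]
  rw [smul_sub, mul_smul_comm, smul_mul_assoc]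

theorem Bf_self (f : UniversalEnvelopingAlgebra K L →ₗ[K] K)
    (u : UniversalEnvelopingAlgebra K L) : Bf f u u = 0 := by
  unfold Bf
  rw [sub_self, map_zero]

theorem Bf_zero_right (f : UniversalEnvelopingAlgebra K L →ₗ[K] K)
    (u : UniversalEnvelopingAlgebra K L) : Bf f u 0 = 0 := by
  unfold Bf
  rw [map_zero, mul_zero, zero_mul, sub_zero, map_zero]

theorem Bf_inv (f : UniversalEnvelopingAlgebra K L →ₗ[K] K)
    (y : L) (u v : UniversalEnvelopingAlgebra K L) :
    Bf f (ι K y * u) v = -Bf f u (ι K y * v) := by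
  unfold Bf
  rw [← map_neg]
  congr 1
  rw [uS_mul, uS_mul, uS_iota]
  noncomm_ring

theorem Bf_skew (f : UniversalEnvelopingAlgebra K L →ₗ[K] K)
    (u v : UniversalEnvelopingAlgebra K L) : Bf f u v = -Bf f v u := by
  unfold Bf
  rw [← map_neg]
  congr 1
  noncomm_ring

theorem Bf_swap (f : UniversalEnvelopingAlgebra K L →ₗ[K] K)
    (z : L) (u v : UniversalEnvelopingAlgebra K L) :
    Bf f u (ι K z * v) = Bf f v (ι K z * u) := by
  have h1 : Bf f (ι K z * u) v = -Bf f u (ι K z * v) := Bf_inv f z u v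
  have h2 : Bf f (ι K z * u) v = -Bf f v (ι K z * u) := Bf_skew f _ _
  rw [h1] at h2
  exact neg_inj.mp h2

theorem Bf_addf (f f' : UniversalEnvelopingAlgebra K L →ₗ[K] K)
    (u v : UniversalEnvelopingAlgebra K L) :
    Bf (f + f') u v = Bf f u v + Bf f' u v := rfl

theorem Bf_smulf (γ : K) (f : UniversalEnvelopingAlgebra K L →ₗ[K] K)
    (u v : UniversalEnvelopingAlgebra K L) :
    Bf (γ • f) u v = γ * Bf f u v := rfl

variable (f : UniversalEnvelopingAlgebra K L →ₗ[K] K)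

/-- The underlying type of the central extension of `LieSemidirect K L` determined by the
2-cocycle attached to `f`. -/
def CentExt (_f : UniversalEnvelopingAlgebra K L →ₗ[K] K) := LieSemidirect K L × K

namespace CentExt

instance : AddCommGroup (CentExt f) := inferInstanceAs (AddCommGroup (LieSemidirect K L × K))

instance : Module K (CentExt f) := inferInstanceAs (Module K (LieSemidirect K L × K))

noncomputable instance : LieRing (CentExt f) where
  bracket p q := (⁅p.1, q.1⁆, Bf f p.1.1 q.1.1)
  add_lie p q r := by
    refine Prod.ext ?_ ?_
    · exact add_lie p.1 q.1 r.1
    · show Bf f (p.1.1 + q.1.1) r.1.1 = Bf f p.1.1 r.1.1 + Bf f q.1.1 r.1.1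
      exact Bf_add_left f _ _ _
  lie_add p q r := by
    refine Prod.ext ?_ ?_
    · exact lie_add p.1 q.1 r.1
    · show Bf f p.1.1 (q.1.1 + r.1.1) = Bf f p.1.1 q.1.1 + Bf f p.1.1 r.1.1
      exact Bf_add_right f _ _ _
  lie_self p := by
    refine Prod.ext ?_ ?_
    · exact lie_self p.1
    · exact Bf_self f _
  leibniz_lie p q r := by
    refine Prod.ext ?_ ?_
    · exact leibniz_lie p.1 q.1 r.1
    · show Bf f p.1.1 (ι K q.1.2 * r.1.1 - ι K r.1.2 * q.1.1)
        = Bf f (ι K p.1.2 * q.1.1 - ι K q.1.2 * p.1.1) r.1.1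
          + Bf f q.1.1 (ι K p.1.2 * r.1.1 - ι K r.1.2 * p.1.1)
      rw [Bf_sub_right, Bf_sub_left, Bf_sub_right, Bf_inv f p.1.2 q.1.1 r.1.1,
        Bf_inv f q.1.2 p.1.1 r.1.1, Bf_swap f r.1.2 p.1.1 q.1.1]
      ring

noncomputable instance : LieAlgebra K (CentExt f) where
  lie_smul c p q := by
    refine Prod.ext ?_ ?_
    · exact lie_smul c p.1 q.1
    · show Bf f p.1.1 (c • q.1.1) = c • Bf f p.1.1 q.1.1
      exact Bf_smul_right f c _ _

/-- Projection onto the semidirect product. -/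
def proj1 : CentExt f →ₗ⁅K⁆ LieSemidirect K L where
  toFun := Prod.fst
  map_add' _ _ := rfl
  map_smul' _ _ := rfl
  map_lie' := rfl

end CentExt

end CocycleLayer
section LiftLayer

open UniversalEnvelopingAlgebra

variable {K : Type*} [Field K] {L : Type*} [LieRing L] [LieAlgebra K L] {n : ℕ}
  (π : FreeLieAlgebra K (Fin n) →ₗ⁅K⁆ LieSemidirect K L)

/-- Lift of `π` to the central extension attached to `f`. -/
noncomputable def piExt (f : UniversalEnvelopingAlgebra K L →ₗ[K] K) :
    FreeLieAlgebra K (Fin n) →ₗ⁅K⁆ CentExt f :=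
  FreeLieAlgebra.lift K fun i => ((π (FreeLieAlgebra.of K i), 0) : CentExt f)

theorem piExt_of (f : UniversalEnvelopingAlgebra K L →ₗ[K] K) (i : Fin n) :
    piExt π f (FreeLieAlgebra.of K i) = (π (FreeLieAlgebra.of K i), 0) :=
  FreeLieAlgebra.lift_of_apply _ _

theorem piExt_fst (f : UniversalEnvelopingAlgebra K L →ₗ[K] K) (w : FreeLieAlgebra K (Fin n)) :
    (piExt π f w).1 = π w := by
  have h : (CentExt.proj1 f).comp (piExt π f) = π :=
    FreeLieAlgebra.hom_ext fun i => by rw [LieHom.comp_apply, piExt_of]; rfl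
  exact DFunLike.congr_fun h w

/-- The functional on the free Lie algebra given by the centre coordinate of the lift. -/
noncomputable def lam (f : UniversalEnvelopingAlgebra K L →ₗ[K] K) :
    FreeLieAlgebra K (Fin n) →ₗ[K] K where
  toFun w := (piExt π f w).2
  map_add' a b := by
    show (piExt π f (a + b)).2 = (piExt π f a).2 + (piExt π f b).2
    rw [map_add]
    rfl
  map_smul' c a := by
    show (piExt π f (c • a)).2 = c • (piExt π f a).2
    rw [map_smul]
    rfl

theorem lam_apply (f : UniversalEnvelopingAlgebra K L →ₗ[K] K) (w : FreeLieAlgebra K (Fin n)) :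
    lam π f w = (piExt π f w).2 := rfl

theorem lam_of (f : UniversalEnvelopingAlgebra K L →ₗ[K] K) (i : Fin n) :
    lam π f (FreeLieAlgebra.of K i) = 0 := by
  rw [lam_apply, piExt_of]

theorem lam_bracket (f : UniversalEnvelopingAlgebra K L →ₗ[K] K)
    (w v : FreeLieAlgebra K (Fin n)) :
    lam π f ⁅w, v⁆ = Bf f (π w).1 (π v).1 := by
  rw [lam_apply, LieHom.map_lie]
  show Bf f (piExt π f w).1.1 (piExt π f v).1.1 = _
  rw [piExt_fst, piExt_fst]

/-- Auxiliary homomorphism witnessing additivity of `lam` in `f`. -/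
noncomputable def combHom (f f' : UniversalEnvelopingAlgebra K L →ₗ[K] K) :
    FreeLieAlgebra K (Fin n) →ₗ⁅K⁆ CentExt (f + f') where
  toFun w := ((π w, lam π f w + lam π f' w) : CentExt (f + f'))
  map_add' a b := by
    refine Prod.ext ?_ ?_
    · exact π.map_add a b
    · show lam π f (a + b) + lam π f' (a + b)
        = (lam π f a + lam π f' a) + (lam π f b + lam π f' b)
      rw [map_add, map_add]
      ring
  map_smul' c a := by
    refine Prod.ext ?_ ?_
    · exact π.map_smul c a
    · show lam π f (c • a) + lam π f' (c • a) = c • (lam π f a + lam π f' a)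
      rw [map_smul, map_smul, smul_add]
  map_lie' {a b} := by
    refine Prod.ext ?_ ?_
    · exact π.map_lie a b
    · show lam π f ⁅a, b⁆ + lam π f' ⁅a, b⁆ = Bf (f + f') (π a).1 (π b).1
      rw [lam_bracket, lam_bracket, Bf_addf]

/-- Auxiliary homomorphism witnessing homogeneity of `lam` in `f`. -/
noncomputable def smulHom (γ : K) (f : UniversalEnvelopingAlgebra K L →ₗ[K] K) :
    FreeLieAlgebra K (Fin n) →ₗ⁅K⁆ CentExt (γ • f) where
  toFun w := ((π w, γ * lam π f w) : CentExt (γ • f))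
  map_add' a b := by
    refine Prod.ext ?_ ?_
    · exact π.map_add a b
    · show γ * lam π f (a + b) = γ * lam π f a + γ * lam π f b
      rw [map_add]
      ring
  map_smul' c a := by
    refine Prod.ext ?_ ?_
    · exact π.map_smul c a
    · show γ * lam π f (c • a) = c • (γ * lam π f a)
      rw [map_smul, smul_eq_mul, smul_eq_mul]
      ring
  map_lie' {a b} := by
    refine Prod.ext ?_ ?_
    · exact π.map_lie a b
    · show γ * lam π f ⁅a, b⁆ = Bf (γ • f) (π a).1 (π b).1
      rw [lam_bracket, Bf_smulf]

theorem lam_addf (f f' : UniversalEnvelopingAlgebra K L →ₗ[K] K) :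
    lam π (f + f') = lam π f + lam π f' := by
  have h : piExt π (f + f') = combHom π f f' := by
    refine FreeLieAlgebra.hom_ext fun i => ?_
    rw [piExt_of]
    show _ = (π (FreeLieAlgebra.of K i),
      lam π f (FreeLieAlgebra.of K i) + lam π f' (FreeLieAlgebra.of K i))
    rw [lam_of, lam_of, add_zero]
  ext w
  show (piExt π (f + f') w).2 = lam π f w + lam π f' w
  rw [h]
  rfl

theorem lam_smulf (γ : K) (f : UniversalEnvelopingAlgebra K L →ₗ[K] K) :
    lam π (γ • f) = γ • lam π f := by
  have h : piExt π (γ • f) = smulHom π γ f := by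
    refine FreeLieAlgebra.hom_ext fun i => ?_
    rw [piExt_of]
    show _ = (π (FreeLieAlgebra.of K i), γ * lam π f (FreeLieAlgebra.of K i))
    rw [lam_of, mul_zero]
  ext w
  show (piExt π (γ • f) w).2 = γ • lam π f w
  rw [h]
  rfl

/-- `lam` as a linear map in `f`. -/
noncomputable def LamL : (UniversalEnvelopingAlgebra K L →ₗ[K] K) →ₗ[K]
    (FreeLieAlgebra K (Fin n) →ₗ[K] K) where
  toFun := lam π
  map_add' := lam_addf π
  map_smul' := lam_smulf π

end LiftLayer

section AdjoinTop

open UniversalEnvelopingAlgebra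

set_option synthInstance.maxHeartbeats 1000000 in
theorem adjoin_iota_eq_top (K : Type*) [Field K] (L : Type*) [LieRing L] [LieAlgebra K L] :
    Algebra.adjoin K (Set.range (⇑(ι K : L →ₗ⁅K⁆ UniversalEnvelopingAlgebra K L))) = ⊤ := by
  set W := Algebra.adjoin K (Set.range (⇑(ι K : L →ₗ⁅K⁆ UniversalEnvelopingAlgebra K L))) with hW
  let j : L →ₗ⁅K⁆ W :=
    { toFun := fun y => ⟨ι K y, Algebra.subset_adjoin (Set.mem_range_self y)⟩
      map_add' := fun a b => Subtype.ext (by simp)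
      map_smul' := fun c a => Subtype.ext (by simp)
      map_lie' := fun {a b} => Subtype.ext (by
        show ι K ⁅a, b⁆ = _
        rw [LieHom.map_lie, Ring.lie_def]
        rfl) }
  have h : W.val.comp (UniversalEnvelopingAlgebra.lift K j) = AlgHom.id K _ := by
    apply UniversalEnvelopingAlgebra.hom_ext
    apply LieHom.ext
    intro x
    show W.val (UniversalEnvelopingAlgebra.lift K j (ι K x)) = ι K x
    rw [UniversalEnvelopingAlgebra.lift_ι_apply]
    rfl
  rw [eq_top_iff]
  intro u _
  have h2 : W.val (UniversalEnvelopingAlgebra.lift K j u) = u := DFunLike.congr_fun h u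
  exact h2 ▸ (UniversalEnvelopingAlgebra.lift K j u).2

end AdjoinTop
theorem lieSemidirect_fg_not_fp (K : Type*) [Field K] [CharZero K]
    (L : Type*) [LieRing L] [LieAlgebra K L] [Nontrivial L] [Module.Finite K L] :
    LieAlgebra.IsFinitelyGenerated K (LieSemidirect K L) ∧
      ¬ LieAlgebra.IsFinitelyPresented K (LieSemidirect K L) := by
  classical
  constructor
  · -- Finite generation
    obtain ⟨m, v, hv⟩ := Module.Finite.exists_fin (R := K) (M := L)
    refine ⟨insert (((1 : UniversalEnvelopingAlgebra K L), (0 : L)) : LieSemidirect K L)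
      (Finset.image (fun i => (((0 : UniversalEnvelopingAlgebra K L), v i) : LieSemidirect K L))
        Finset.univ), ?_⟩
    set S : Finset (LieSemidirect K L) :=
      insert (((1 : UniversalEnvelopingAlgebra K L), (0 : L)) : LieSemidirect K L)
      (Finset.image (fun i => (((0 : UniversalEnvelopingAlgebra K L), v i) : LieSemidirect K L))
        Finset.univ) with hS
    set P := LieSubalgebra.lieSpan K (LieSemidirect K L) (S : Set (LieSemidirect K L)) with hP
    have h1 : (((1 : UniversalEnvelopingAlgebra K L), (0 : L)) : LieSemidirect K L) ∈ P :=
      LieSubalgebra.subset_lieSpan (Finset.mem_coe.mpr (Finset.mem_insert_self _ _))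
    -- the map x ↦ (0, x)
    let σ : L →ₗ[K] LieSemidirect K L :=
      { toFun := fun y => (((0 : UniversalEnvelopingAlgebra K L), y) : LieSemidirect K L)
        map_add' := fun a b => by
          refine Prod.ext ?_ rfl
          show (0 : UniversalEnvelopingAlgebra K L) = 0 + 0
          rw [add_zero]
        map_smul' := fun c a => by
          refine Prod.ext ?_ rfl
          show (0 : UniversalEnvelopingAlgebra K L) = c • 0
          rw [smul_zero] }
    have hLy : ∀ y : L, (((0 : UniversalEnvelopingAlgebra K L), y) : LieSemidirect K L) ∈ P := by
      intro y
      have hspan : Submodule.span K (Set.range v) ≤ (P.toSubmodule).comap σ := by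
        refine Submodule.span_le.mpr ?_
        rintro _ ⟨i, rfl⟩
        show σ (v i) ∈ P.toSubmodule
        rw [LieSubalgebra.mem_toSubmodule]
        exact LieSubalgebra.subset_lieSpan
          (Finset.mem_coe.mpr (Finset.mem_insert_of_mem (Finset.mem_image_of_mem _ (Finset.mem_univ i))))
      have hy : y ∈ Submodule.span K (Set.range v) := by rw [hv]; trivial
      have := hspan hy
      rw [Submodule.mem_comap, LieSubalgebra.mem_toSubmodule] at this
      exact this
    -- the set of u with (u,0) ∈ P
    let A : Submodule K (UniversalEnvelopingAlgebra K L) :=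
      { carrier := {u | ((u, (0 : L)) : LieSemidirect K L) ∈ P}
        add_mem' := fun {a b} ha hb => by
          have h := P.add_mem ha hb
          have heq : ((a, (0 : L)) : LieSemidirect K L) + ((b, (0 : L)) : LieSemidirect K L)
              = ((a + b, (0 : L)) : LieSemidirect K L) := by
            refine Prod.ext rfl ?_
            show (0 : L) + 0 = 0
            rw [add_zero]
          exact (congrArg (· ∈ P) heq).mp h
        zero_mem' := P.zero_mem
        smul_mem' := fun c a ha => by
          have h := P.smul_mem c ha
          have heq : c • ((a, (0 : L)) : LieSemidirect K L)
              = ((c • a, (0 : L)) : LieSemidirect K L) := by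
            refine Prod.ext rfl ?_
            show c • (0 : L) = 0
            rw [smul_zero]
          exact (congrArg (· ∈ P) heq).mp h }
    have hA1 : (1 : UniversalEnvelopingAlgebra K L) ∈ A := h1
    have hstep : ∀ (y : L) (u : UniversalEnvelopingAlgebra K L),
        u ∈ A → UniversalEnvelopingAlgebra.ι K y * u ∈ A := by
      intro y u hu
      have hb := P.lie_mem (hLy y) hu
      replace hb := (congrArg (· ∈ P) (LieSemidirect.bracket_def' _ _)).mp hb
      simp at hb
      exact hb
    let Bs : Subalgebra K (UniversalEnvelopingAlgebra K L) :=
      { carrier := {a | ∀ u ∈ A, a * u ∈ A}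
        mul_mem' := fun {a b} ha hb u hu => by
          rw [mul_assoc]
          exact ha _ (hb _ hu)
        one_mem' := fun u hu => by rwa [one_mul]
        add_mem' := fun {a b} ha hb u hu => by
          rw [add_mul]
          exact A.add_mem (ha u hu) (hb u hu)
        zero_mem' := fun u hu => by
          rw [zero_mul]
          exact A.zero_mem
        algebraMap_mem' := fun c u hu => by
          rw [Algebra.algebraMap_eq_smul_one, smul_mul_assoc, one_mul]
          exact A.smul_mem c hu }
    have hW : ∀ a : UniversalEnvelopingAlgebra K L, ∀ u ∈ A, a * u ∈ A := by
      have hle : Algebra.adjoin K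
          (Set.range (⇑(UniversalEnvelopingAlgebra.ι K :
            L →ₗ⁅K⁆ UniversalEnvelopingAlgebra K L))) ≤ Bs := by
        refine Algebra.adjoin_le ?_
        rintro _ ⟨y, rfl⟩
        exact fun u hu => hstep y u hu
      rw [adjoin_iota_eq_top] at hle
      exact fun a => hle trivial
    have hAall : ∀ u : UniversalEnvelopingAlgebra K L, u ∈ A := by
      intro u
      have := hW u 1 hA1
      rwa [mul_one] at this
    rw [eq_top_iff]
    intro p _
    have hdec : p = ((p.1, (0 : L)) : LieSemidirect K L)
        + (((0 : UniversalEnvelopingAlgebra K L), p.2) : LieSemidirect K L) := by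
      refine Prod.ext ?_ ?_
      · show p.1 = p.1 + 0
        rw [add_zero]
      · show p.2 = 0 + p.2
        rw [zero_add]
    rw [hdec]
    exact P.add_mem (hAall p.1) (hLy p.2)
  · -- Not finitely presented
    rintro ⟨n, π, hsurj, s, hspan⟩
    obtain ⟨x, hx⟩ := exists_iota_ne_zero K L
    set t := UniversalEnvelopingAlgebra.ι K x with ht
    set k := s.card with hk
    -- dual functionals to odd powers of t
    have hli : LinearIndependent K fun j : Fin (k + 1) => t ^ (2 * (j : ℕ) + 1) := by
      have hbig := iota_pow_linearIndependent hx (2 * k + 2)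
      have hcomp := hbig.comp (fun j : Fin (k + 1) => (⟨2 * (j : ℕ) + 1, by omega⟩ : Fin (2 * k + 2)))
        (fun a b hab => by
          simp only [Fin.mk.injEq] at hab
          exact Fin.ext (by omega))
      exact hcomp
    obtain ⟨g, hg⟩ := exists_dual_family hli
    -- the vectors of values on the relators
    have hdep : ¬ LinearIndependent K fun j : Fin (k + 1) =>
        (fun r : s => lam π (g j) (r : FreeLieAlgebra K (Fin n))) := by
      intro hind
      have hcard := hind.fintype_card_le_finrank
      rw [Module.finrank_fintype_fun_eq_card] at hcard
      simp [Fintype.card_coe] at hcard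
      omega
    obtain ⟨γ, hγsum, j0, hj0⟩ := Fintype.not_linearIndependent_iff.mp hdep
    set fstar : UniversalEnvelopingAlgebra K L →ₗ[K] K := ∑ j, γ j • g j with hfstar
    have hlam_sum : lam π fstar = ∑ j, γ j • lam π (g j) := by
      rw [hfstar]
      rw [show (lam π (∑ j, γ j • g j)) = LamL π (∑ j, γ j • g j) from rfl]
      rw [map_sum]
      refine Finset.sum_congr rfl fun j _ => ?_
      rw [map_smul]
      rfl
    -- lam fstar vanishes on the relators
    have hlam_s : ∀ r ∈ s, lam π fstar r = 0 := by
      intro r hr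
      rw [hlam_sum]
      have := congrFun hγsum (⟨r, hr⟩ : s)
      simpa using this
    -- lam fstar vanishes on all brackets with kernel elements
    have hlam_br : ∀ (w v : FreeLieAlgebra K (Fin n)), v ∈ π.ker →
        lam π fstar ⁅w, v⁆ = 0 := by
      intro w v hv
      rw [lam_bracket]
      rw [LieHom.mem_ker] at hv
      rw [hv]
      exact Bf_zero_right _ _
    -- hence lam fstar vanishes on the whole kernel
    have hs_ker : (s : Set (FreeLieAlgebra K (Fin n))) ⊆ π.ker := by
      intro r hr
      rw [← hspan]
      exact LieSubmodule.subset_lieSpan hr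
    have hker : ∀ w ∈ π.ker, lam π fstar w = 0 := by
      set Brk : Set (FreeLieAlgebra K (Fin n)) :=
        {z | ∃ w v : FreeLieAlgebra K (Fin n), v ∈ π.ker ∧ z = ⁅w, v⁆} with hBrk
      let Q : Submodule K (FreeLieAlgebra K (Fin n)) :=
        Submodule.span K ((s : Set (FreeLieAlgebra K (Fin n))) ∪ Brk)
      have hQlie : ∀ (z : FreeLieAlgebra K (Fin n)) (q : FreeLieAlgebra K (Fin n)),
          q ∈ Q → ⁅z, q⁆ ∈ Q := by
        intro z q hq
        induction hq using Submodule.span_induction with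
        | mem y hy =>
          rcases hy with hy | hy
          · have hy' : y ∈ π.ker := hs_ker hy
            exact Submodule.subset_span (Or.inr ⟨z, y, hy', rfl⟩)
          · obtain ⟨w, v, hv, rfl⟩ := hy
            have hv' : ⁅w, v⁆ ∈ π.ker := (π.ker).lie_mem hv
            exact Submodule.subset_span (Or.inr ⟨z, ⁅w, v⁆, hv', rfl⟩)
        | zero => rw [lie_zero]; exact Q.zero_mem
        | add a b _ _ ha hb => rw [lie_add]; exact Q.add_mem ha hb
        | smul c a _ ha => rw [lie_smul]; exact Q.smul_mem c ha
      let Q' : LieSubmodule K (FreeLieAlgebra K (Fin n)) (FreeLieAlgebra K (Fin n)) :=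
        { toSubmodule := Q
          lie_mem := fun {z q} hq => hQlie z q hq }
      have hle : π.ker ≤ Q' := by
        rw [← hspan]
        rw [LieSubmodule.lieSpan_le]
        intro r hr
        exact Submodule.subset_span (Or.inl hr)
      intro w hw
      have hwQ : w ∈ Q := hle hw
      have hQker : Q ≤ LinearMap.ker (lam π fstar) := by
        refine Submodule.span_le.mpr ?_
        rintro z (hz | ⟨a, b, hb, rfl⟩)
        · simp only [SetLike.mem_coe, LinearMap.mem_ker]
          exact hlam_s z hz
        · simp only [SetLike.mem_coe, LinearMap.mem_ker]
          exact hlam_br a b hb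
      have := hQker hwQ
      rwa [LinearMap.mem_ker] at this
    -- evaluate on a pair of preimages
    obtain ⟨w, hw⟩ := hsurj (((1 : UniversalEnvelopingAlgebra K L), (0 : L)) : LieSemidirect K L)
    obtain ⟨u, hu⟩ := hsurj ((t ^ (2 * (j0 : ℕ) + 1), (0 : L)) : LieSemidirect K L)
    have hbr0 : π ⁅w, u⁆ = 0 := by
      rw [LieHom.map_lie, hw, hu]
      refine (LieSemidirect.bracket_def' _ _).trans ?_
      refine Prod.ext ?_ ?_ <;> simp <;> rfl
    have hmem : ⁅w, u⁆ ∈ π.ker := LieHom.mem_ker.mpr hbr0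
    have hz := hker _ hmem
    rw [lam_bracket, hw, hu] at hz
    -- hz : Bf fstar 1 (t ^ (2 j0 + 1)) = 0
    have hBval : Bf fstar (1 : UniversalEnvelopingAlgebra K L) (t ^ (2 * (j0 : ℕ) + 1))
        = fstar (t ^ (2 * (j0 : ℕ) + 1)) + fstar (t ^ (2 * (j0 : ℕ) + 1)) := by
      unfold Bf
      rw [uS_one, one_mul, mul_one, ht]
      rw [uS_pow, Odd.neg_pow ⟨(j0 : ℕ), by ring⟩, sub_neg_eq_add, map_add]
    have hfval : fstar (t ^ (2 * (j0 : ℕ) + 1)) = γ j0 := by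
      rw [hfstar, LinearMap.sum_apply, Finset.sum_eq_single j0]
      · have h00 := hg j0 j0
        simp at h00
        rw [LinearMap.smul_apply, h00, smul_eq_mul, mul_one]
      · intro j _ hne
        have h01 := hg j j0
        rw [if_neg hne] at h01
        rw [LinearMap.smul_apply, h01, smul_zero]
      · intro h
        exact absurd (Finset.mem_univ j0) h
    rw [hBval, hfval] at hz
    have : γ j0 = 0 := by
      have h2 : (2 : K) * γ j0 = 0 := by rw [two_mul]; exact hz
      rcases mul_eq_zero.mp h2 with h | h
      · exact absurd h two_ne_zero
      · exact h
    exact hj0 this
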